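/- A smooth function f on ℂⁿ satisfies the first-order system ∂f/∂zⁱ − λᵢ\bar{z}ⁱ f = 0 for all 1 ≤ i ≤ q and ∂f/∂\bar{z}ⁱ + λᵢzⁱ f = 0 for all q+1 ≤ i ≤ n if and only if F(z) := f(\bar{z}¹,…,\bar{z}^q, z^{q+1},…,zⁿ) · e^{−Σᵢ₌₁^q λᵢ|zⁱ|² + Σ_{i>q} λᵢ|zⁱ|²} is holomorphic on ℂⁿ. -/

import Mathlib

/-- The Wirtinger derivative `∂/∂zⁱ`. -/
noncomputable def wD {n : ℕ} (i : Fin n) (f : (Fin n → ℂ) → ℂ) (z : Fin n → ℂ) : ℂ :=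
  (1 / 2) * (fderiv ℝ f z (Pi.single i 1) - Complex.I * fderiv ℝ f z (Pi.single i Complex.I))

/-- The Wirtinger derivative `∂/∂z̄ⁱ`. -/
noncomputable def wDb {n : ℕ} (i : Fin n) (f : (Fin n → ℂ) → ℂ) (z : Fin n → ℂ) : ℂ :=
  (1 / 2) * (fderiv ℝ f z (Pi.single i 1) + Complex.I * fderiv ℝ f z (Pi.single i Complex.I))

open Complex ContinuousLinearMap

section Aux

/-- Coordinate-wise conjugation in the first `q` coordinates, as an `ℝ`-CLM. -/
noncomputable def sig (n q : ℕ) : (Fin n → ℂ) →L[ℝ] (Fin n → ℂ) :=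
  ContinuousLinearMap.pi (fun i => if (i : ℕ) < q then
    Complex.conjCLE.toContinuousLinearMap.comp (ContinuousLinearMap.proj i)
    else ContinuousLinearMap.proj i)

lemma sig_apply (n q : ℕ) (z : Fin n → ℂ) (i : Fin n) :
    sig n q z i = if (i : ℕ) < q then (starRingEnd ℂ) (z i) else z i := by
  unfold sig
  by_cases h : (i : ℕ) < q <;> simp [h]

lemma sig_sig (n q : ℕ) (z : Fin n → ℂ) : sig n q (sig n q z) = z := by
  funext i
  simp only [sig_apply]
  split <;> simp

lemma sig_single (n q : ℕ) (i : Fin n) (c : ℂ) :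
    sig n q (Pi.single i c) = Pi.single i (if (i : ℕ) < q then (starRingEnd ℂ) c else c) := by
  funext j
  simp only [sig_apply, Pi.single_apply]
  by_cases h : j = i
  · subst h; split <;> simp
  · simp [h]

lemma single_eq_smul {n : ℕ} (i : Fin n) (c : ℂ) :
    (Pi.single i c : Fin n → ℂ) =
      c.re • (Pi.single i 1 : Fin n → ℂ) + c.im • (Pi.single i Complex.I : Fin n → ℂ) := by
  funext j
  by_cases h : j = i
  · subst h; simp [Complex.ext_iff]
  · simp [Pi.single_apply, h]

/-- A real-differentiable function with vanishing `∂/∂z̄ⁱ` everywhere is holomorphic. -/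
lemma diffC_of_wDb {n : ℕ} {F : (Fin n → ℂ) → ℂ} (hF : Differentiable ℝ F)
    (h : ∀ z i, wDb i F z = 0) : Differentiable ℂ F := by
  intro z
  set L := fderiv ℝ F z with hLdef
  have hL : ∀ i, L (Pi.single i Complex.I) = Complex.I * L (Pi.single i 1) := by
    intro i
    have h2 := h z i
    unfold wDb at h2
    rw [← hLdef] at h2
    linear_combination (-2 * Complex.I) * h2 + L (Pi.single i Complex.I) * Complex.I_sq
  set L' : (Fin n → ℂ) →L[ℂ] ℂ :=
    ∑ i : Fin n, (L (Pi.single i 1)) • (ContinuousLinearMap.proj i) with hL'def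
  have key : L'.restrictScalars ℝ = L := by
    ext v
    have hv : v = ∑ i : Fin n, Pi.single i (v i) := by
      simp [Finset.univ_sum_single]
    rw [ContinuousLinearMap.coe_restrictScalars']
    conv_rhs => rw [hv]
    rw [map_sum]
    simp only [hL'def, ContinuousLinearMap.sum_apply, ContinuousLinearMap.smul_apply,
      ContinuousLinearMap.proj_apply]
    congr 1
    funext i
    rw [single_eq_smul i (v i), map_add, map_smul, map_smul, hL i]
    rw [Complex.real_smul, Complex.real_smul, smul_eq_mul]
    linear_combination (-(L (Pi.single i 1))) * (Complex.re_add_im (v i))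
  exact (hasFDerivAt_of_restrictScalars ℝ (hF z).hasFDerivAt key).differentiableAt

/-- Conversely, a holomorphic function has vanishing `∂/∂z̄ⁱ`. -/
lemma wDb_eq_zero {n : ℕ} {F : (Fin n → ℂ) → ℂ} (hF : Differentiable ℂ F)
    (z : Fin n → ℂ) (i : Fin n) : wDb i F z = 0 := by
  have h := (hF z).fderiv_restrictScalars ℝ
  unfold wDb
  rw [h]
  have hs : (Pi.single i Complex.I : Fin n → ℂ) = Complex.I • (Pi.single i 1 : Fin n → ℂ) := by
    funext j
    by_cases hj : j = i
    · subst hj; simp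
    · simp [Pi.single_apply, hj]
  rw [ContinuousLinearMap.coe_restrictScalars', hs, map_smul, smul_eq_mul]
  set c := fderiv ℂ F z (Pi.single i 1)
  linear_combination (1 / 2) * c * Complex.I_sq

/-- The exponent `∑ ±λᵢ zⁱ z̄ⁱ`. -/
noncomputable def Sarg (n q : ℕ) (lam : Fin n → ℝ) (z : Fin n → ℂ) : ℂ :=
  ∑ i : Fin n, ((if (i : ℕ) < q then -lam i else lam i : ℝ) : ℂ) * (z i * (starRingEnd ℂ) (z i))

/-- Derivative of the exponent. -/
noncomputable def Dh (n q : ℕ) (lam : Fin n → ℝ) (z : Fin n → ℂ) : (Fin n → ℂ) →L[ℝ] ℂ :=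
  ∑ i : Fin n, ((if (i : ℕ) < q then -lam i else lam i : ℝ) : ℂ) •
    ((z i) • (Complex.conjCLE.toContinuousLinearMap.comp (ContinuousLinearMap.proj i)) +
     ((starRingEnd ℂ) (z i)) • (ContinuousLinearMap.proj i : (Fin n → ℂ) →L[ℝ] ℂ))

lemma hasF (n q : ℕ) (lam : Fin n → ℝ) (f : (Fin n → ℂ) → ℂ)
    (hf : ContDiff ℝ (⊤ : ℕ∞) f) (z : Fin n → ℂ) :
    HasFDerivAt (fun z => f (sig n q z) * Complex.exp (Sarg n q lam z))
      (f (sig n q z) • (Complex.exp (Sarg n q lam z) • Dh n q lam z) +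
        Complex.exp (Sarg n q lam z) • ((fderiv ℝ f (sig n q z)).comp (sig n q))) z := by
  have hfσ : HasFDerivAt (fun z => f (sig n q z))
      ((fderiv ℝ f (sig n q z)).comp (sig n q)) z :=
    ((hf.differentiable (by norm_num) (sig n q z)).hasFDerivAt).comp z (sig n q).hasFDerivAt
  have hh : HasFDerivAt (Sarg n q lam) (Dh n q lam z) z := by
    unfold Sarg Dh
    apply HasFDerivAt.fun_sum
    intro i _
    exact ((hasFDerivAt_apply i z).mul
      ((Complex.conjCLE.hasFDerivAt).comp z (hasFDerivAt_apply i z))).const_mul _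
  exact hfσ.mul hh.cexp

lemma Dh_single (n q : ℕ) (lam : Fin n → ℝ) (z : Fin n → ℂ) (i : Fin n) (c : ℂ) :
    Dh n q lam z (Pi.single i c) =
      ((if (i : ℕ) < q then -lam i else lam i : ℝ) : ℂ) *
        (z i * (starRingEnd ℂ) c + (starRingEnd ℂ) (z i) * c) := by
  unfold Dh
  simp only [ContinuousLinearMap.sum_apply, ContinuousLinearMap.smul_apply,
    ContinuousLinearMap.add_apply, ContinuousLinearMap.comp_apply,
    ContinuousLinearMap.proj_apply, ContinuousLinearEquiv.coe_coe, Pi.single_apply,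
    smul_eq_mul]
  rw [Finset.sum_eq_single i]
  · simp
  · intro j _ hj
    simp [hj]
  · simp

lemma wDb_Fterm (n q : ℕ) (lam : Fin n → ℝ) (f : (Fin n → ℂ) → ℂ)
    (hf : ContDiff ℝ (⊤ : ℕ∞) f) (z : Fin n → ℂ) (i : Fin n) :
    wDb i (fun z => f (sig n q z) * Complex.exp (Sarg n q lam z)) z =
      Complex.exp (Sarg n q lam z) *
        (if (i : ℕ) < q then
          wD i f (sig n q z) - (lam i : ℂ) * (starRingEnd ℂ) (sig n q z i) * f (sig n q z)
        else wDb i f (sig n q z) + (lam i : ℂ) * (sig n q z i) * f (sig n q z)) := by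
  simp only [wD, wDb]
  rw [(hasF n q lam f hf z).fderiv]
  simp only [ContinuousLinearMap.add_apply, ContinuousLinearMap.smul_apply,
    ContinuousLinearMap.comp_apply, Dh_single, sig_single, smul_eq_mul, sig_apply,
    starRingEnd_self_apply]
  by_cases h : (i : ℕ) < q
  · simp only [h, if_true, map_one, Complex.conj_I, starRingEnd_self_apply]
    have h1 : (Pi.single i (-Complex.I) : Fin n → ℂ) = -Pi.single i Complex.I := by
      funext j; by_cases hj : j = i
      · subst hj; simp
      · simp [Pi.single_apply, hj]
    rw [h1, map_neg]
    set D1 := fderiv ℝ f (sig n q z) (Pi.single i 1)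
    set DI := fderiv ℝ f (sig n q z) (Pi.single i Complex.I)
    set E := Complex.exp (Sarg n q lam z)
    set w := f (sig n q z)
    set zi := z i
    set czi := (starRingEnd ℂ) zi
    push_cast
    linear_combination ((1/2) * (lam i : ℂ) * w * E * (zi - czi)) * Complex.I_sq
  · simp only [h, if_false, map_one, Complex.conj_I]
    set D1 := fderiv ℝ f (sig n q z) (Pi.single i 1)
    set DI := fderiv ℝ f (sig n q z) (Pi.single i Complex.I)
    set E := Complex.exp (Sarg n q lam z)
    set w := f (sig n q z)
    set zi := z i
    set czi := (starRingEnd ℂ) zi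
    linear_combination ((1/2) * (lam i : ℂ) * w * E * (czi - zi)) * Complex.I_sq

end Aux

/-- a smooth `f : ℂⁿ → ℂ` satisfies
`∂f/∂zⁱ − λᵢ z̄ⁱ f = 0` for `i ≤ q` and `∂f/∂z̄ⁱ + λᵢ zⁱ f = 0` for `i > q`
if and only if
`F(z) := f(z̄¹,…,z̄^q, z^{q+1},…,zⁿ) · e^{−Σ_{i≤q} λᵢ|zⁱ|² + Σ_{i>q} λᵢ|zⁱ|²}`
is holomorphic on `ℂⁿ`. -/
theorem stmt_11 (n q : ℕ) (hq : q ≤ n) (lam : Fin n → ℝ)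
    (f : (Fin n → ℂ) → ℂ) (hf : ContDiff ℝ (⊤ : ℕ∞) f) :
    ((∀ (z : Fin n → ℂ) (i : Fin n),
        ((i : ℕ) < q → wD i f z - (lam i : ℂ) * (starRingEnd ℂ) (z i) * f z = 0) ∧
        (q ≤ (i : ℕ) → wDb i f z + (lam i : ℂ) * z i * f z = 0))
      ↔ Differentiable ℂ (fun z : Fin n → ℂ =>
          f (fun i => if (i : ℕ) < q then (starRingEnd ℂ) (z i) else z i) *
            Complex.exp
              ((∑ i : Fin n, (if (i : ℕ) < q then -(lam i) else lam i) * ‖z i‖ ^ 2 : ℝ)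
                : ℂ))) := by
  have hFun : (fun z : Fin n → ℂ =>
      f (fun i => if (i : ℕ) < q then (starRingEnd ℂ) (z i) else z i) *
        Complex.exp
          ((∑ i : Fin n, (if (i : ℕ) < q then -(lam i) else lam i) * ‖z i‖ ^ 2 : ℝ)
            : ℂ)) = fun z => f (sig n q z) * Complex.exp (Sarg n q lam z) := by
    funext z
    congr 1
    · congr 1
      funext i
      exact (sig_apply n q z i).symm
    · congr 1
      unfold Sarg
      rw [Complex.ofReal_sum]
      refine Finset.sum_congr rfl fun i _ => ?_
      rw [Complex.ofReal_mul, Complex.sq_norm, ← Complex.mul_conj]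
  rw [hFun]
  have hdiff : Differentiable ℝ (fun z => f (sig n q z) * Complex.exp (Sarg n q lam z)) :=
    fun z => (hasF n q lam f hf z).differentiableAt
  constructor
  · intro H
    apply diffC_of_wDb hdiff
    intro z i
    rw [wDb_Fterm n q lam f hf z i]
    rcases H (sig n q z) i with ⟨h1, h2⟩
    by_cases hi : (i : ℕ) < q
    · rw [if_pos hi, h1 hi, mul_zero]
    · rw [if_neg hi, h2 (le_of_not_gt hi), mul_zero]
  · intro H z i
    have h0 := wDb_eq_zero H (sig n q z) i
    rw [wDb_Fterm n q lam f hf (sig n q z) i, sig_sig] at h0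
    have hE : Complex.exp (Sarg n q lam (sig n q z)) ≠ 0 := Complex.exp_ne_zero _
    rcases mul_eq_zero.1 h0 with h | h
    · exact absurd h hE
    · constructor
      · intro hi
        rwa [if_pos hi] at h
      · intro hi
        rwa [if_neg (Nat.not_lt.2 hi)] at h
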